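/- Matrix Cayley-type parametrization of shifted inverses: Let δ ∈ ℂ^{r×r} be such that I := Im(δ) = (δ − δ^*)/(2i) is positive definite. Then { (B − δ)^{-1} : B ∈ ℂ^{r×r} with Im(B) negative definite } = { (i/2)·I^{-1} + (1/2)·I^{-1/2} R I^{-1/2} : R ∈ ℂ^{r×r} with 1_r − R^*R positive definite }. (Here for Im(B) negative definite the matrix B − δ is invertible since Im(B − δ) is negative definite, and I^{-1/2} denotes the inverse of the positive definite square root of I.) -/

import Mathlib

set_option linter.unusedSectionVars false
set_option maxHeartbeats 1000000

open Matrix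
open scoped ComplexOrder

noncomputable section

/-- The imaginary part `(M − M^*)/(2i)` of a square complex matrix. -/
def matIm {n : Type*} (M : Matrix n n ℂ) : Matrix n n ℂ :=
  (2 * Complex.I)⁻¹ • (M - Mᴴ)

/-- The square root of a positive semidefinite matrix, as `Matrix.PosSemidef.sqrt` was defined
in the older Mathlib. -/
def posSemidefSqrt {n : Type*} [Fintype n] [DecidableEq n] {A : Matrix n n ℂ}
    (hA : A.PosSemidef) : Matrix n n ℂ :=
  hA.1.eigenvectorUnitary.1 * diagonal ((↑) ∘ (√·) ∘ hA.1.eigenvalues) *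
    (star hA.1.eigenvectorUnitary : Matrix n n ℂ)
namespace CayleyAux

variable {n : Type*} [Fintype n] [DecidableEq n]

lemma psqrt_herm {n : Type*} [Fintype n] [DecidableEq n] {A : Matrix n n ℂ}
    (hA : A.PosSemidef) : (posSemidefSqrt hA)ᴴ = posSemidefSqrt hA := by
  rw [posSemidefSqrt, conjTranspose_mul, conjTranspose_mul, diagonal_conjTranspose,
    ← star_eq_conjTranspose, ← star_eq_conjTranspose, star_star, Matrix.mul_assoc]
  congr 3
  funext i
  simp
lemma psqrt_mul_self {n : Type*} [Fintype n] [DecidableEq n] {A : Matrix n n ℂ}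
    (hA : A.PosSemidef) : posSemidefSqrt hA * posSemidefSqrt hA = A := by
  have hU : (star hA.1.eigenvectorUnitary : Matrix n n ℂ) * hA.1.eigenvectorUnitary.1 = 1 :=
    Unitary.star_mul_self_of_mem hA.1.eigenvectorUnitary.2
  have hD : diagonal (((↑) ∘ (√·) ∘ hA.1.eigenvalues : n → ℂ)) *
      diagonal ((↑) ∘ (√·) ∘ hA.1.eigenvalues) = diagonal (RCLike.ofReal ∘ hA.1.eigenvalues) := by
    rw [diagonal_mul_diagonal]
    congr 1; funext i
    simp only [Function.comp]
    rw [← Complex.ofReal_mul, Real.mul_self_sqrt (hA.eigenvalues_nonneg i)]; rfl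
  conv_rhs => rw [hA.1.spectral_theorem, Unitary.conjStarAlgAut_apply]
  simp only [posSemidefSqrt, Matrix.mul_assoc]
  rw [← Matrix.mul_assoc (star _ : Matrix n n ℂ), hU, Matrix.one_mul, ← hD, Matrix.mul_assoc]

lemma two_I_inv : (2 * Complex.I)⁻¹ = -(Complex.I/2) := by
  rw [mul_inv, Complex.inv_I]; ring

lemma matIm_sub (M N : Matrix n n ℂ) : matIm (M - N) = matIm M - matIm N := by
  unfold matIm
  rw [conjTranspose_sub, ← smul_sub]
  congr 1
  abel

/-- conjugation preserves posdef -/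
lemma posDef_conj {M C : Matrix n n ℂ} (hM : M.PosDef) (hC : IsUnit C) :
    (Cᴴ * M * C).PosDef := by
  refine PosDef.of_dotProduct_mulVec_pos ?_ ?_
  · exact isHermitian_conjTranspose_mul_mul C hM.1
  · intro x hx
    have h1 : C *ᵥ x ≠ 0 := by
      intro h
      exact hx <| (Matrix.mulVec_injective_iff_isUnit.mpr hC) (by simpa using h)
    simpa only [star_mulVec, dotProduct_mulVec, vecMul_vecMul] using hM.dotProduct_mulVec_pos h1

lemma posDef_conj_iff {M C : Matrix n n ℂ} (hC : IsUnit C) :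
    (Cᴴ * M * C).PosDef ↔ M.PosDef := by
  refine ⟨fun h => ?_, fun h => posDef_conj h hC⟩
  have h2 := posDef_conj h (Matrix.isUnit_nonsing_inv_iff.mpr hC)
  have hd : IsUnit C.det := (Matrix.isUnit_iff_isUnit_det C).mp hC
  rwa [conjTranspose_nonsing_inv, Matrix.mul_assoc, Matrix.mul_assoc,
    Matrix.mul_nonsing_inv _ hd, Matrix.mul_one, ← Matrix.mul_assoc,
    ← conjTranspose_nonsing_inv, ← conjTranspose_mul,
    Matrix.mul_nonsing_inv _ hd, conjTranspose_one, Matrix.one_mul] at h2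

/-- posdef imaginary part implies invertible -/
lemma isUnit_of_matIm_posDef {X : Matrix n n ℂ} (h : (matIm X).PosDef) : IsUnit X := by
  by_contra hX
  have hni : ¬Function.Injective X.mulVec := fun h' =>
    hX (Matrix.mulVec_injective_iff_isUnit.mp h')
  rw [Function.not_injective_iff] at hni
  obtain ⟨a, b, hab, hne⟩ := hni
  set v := a - b with hv
  have hv0 : v ≠ 0 := sub_ne_zero.mpr hne
  have hXv : X *ᵥ v = 0 := by rw [hv, mulVec_sub, hab, sub_self]
  have := h.dotProduct_mulVec_pos hv0
  rw [matIm, smul_mulVec, sub_mulVec, hXv, zero_sub, dotProduct_smul,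
    dotProduct_neg, dotProduct_mulVec, ← star_mulVec, hXv] at this
  simp at this

/-- Identity P -/
lemma idP (J S X : Matrix n n ℂ) (hSh : Sᴴ = S) (hSS : S * S = J) :
    1 - ((2:ℂ)•(S*X*S) - Complex.I•(1:Matrix n n ℂ))ᴴ * ((2:ℂ)•(S*X*S) - Complex.I•1)
      = S * ((4:ℂ) • (matIm X - Xᴴ * J * X)) * S := by
  have hSS2 : ∀ M : Matrix n n ℂ, S * (S * M) = J * M := fun M => by
    rw [← Matrix.mul_assoc, hSS]
  simp only [matIm, two_I_inv, conjTranspose_sub, conjTranspose_smul, conjTranspose_mul,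
    conjTranspose_one, hSh, Complex.star_def, Complex.conj_I, map_ofNat]
  simp only [Matrix.mul_sub, Matrix.sub_mul, Matrix.mul_add, Matrix.add_mul, smul_sub, smul_add,
    smul_smul, Matrix.mul_smul, Matrix.smul_mul, Matrix.mul_one, Matrix.one_mul,
    Matrix.mul_assoc, hSS2]
  match_scalars
  all_goals try ring
  all_goals linear_combination Complex.I_sq

/-- Identity Q -/
lemma idQ (d A X : Matrix n n ℂ) (h1 : X * A = 1) (h2 : A * X = 1) :
    matIm X - Xᴴ * matIm d * X = Xᴴ * (-(matIm (A + d))) * X := by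
  have hAX : ∀ M : Matrix n n ℂ, A * (X * M) = M := fun M => by
    rw [← Matrix.mul_assoc, h2, Matrix.one_mul]
  have hXA2 : Xᴴ * Aᴴ = 1 := by rw [← conjTranspose_mul, h2, conjTranspose_one]
  have hXAh : ∀ M : Matrix n n ℂ, Xᴴ * (Aᴴ * M) = M := fun M => by
    rw [← Matrix.mul_assoc, hXA2, Matrix.one_mul]
  have hXA : ∀ M : Matrix n n ℂ, X * (A * M) = M := fun M => by
    rw [← Matrix.mul_assoc, h1, Matrix.one_mul]
  simp only [matIm, two_I_inv, conjTranspose_add]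
  simp only [matIm, two_I_inv, Matrix.mul_sub, Matrix.sub_mul, Matrix.mul_add, Matrix.add_mul,
    smul_sub, smul_add, smul_smul, Matrix.mul_smul, Matrix.smul_mul, Matrix.mul_one,
    Matrix.one_mul, Matrix.neg_mul, Matrix.mul_neg, neg_sub, neg_add, neg_neg, smul_neg,
    neg_smul, Matrix.mul_assoc, hXAh, hXA]
  rw [show Xᴴ * (A * X) = Xᴴ by rw [h2, Matrix.mul_one]]
  match_scalars
  all_goals ring

end CayleyAux

open CayleyAux

theorem cayley_parametrization {r : ℕ}
    (δ : Matrix (Fin r) (Fin r) ℂ) (hI : (matIm δ).PosDef) :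
    {X : Matrix (Fin r) (Fin r) ℂ |
        ∃ B : Matrix (Fin r) (Fin r) ℂ, (-(matIm B)).PosDef ∧ X = (B - δ)⁻¹} =
    {X : Matrix (Fin r) (Fin r) ℂ |
        ∃ R : Matrix (Fin r) (Fin r) ℂ, (1 - Rᴴ * R).PosDef ∧
          X = (Complex.I / 2) • (matIm δ)⁻¹ +
            (1 / 2 : ℂ) • ((posSemidefSqrt hI.posSemidef)⁻¹ * R * (posSemidefSqrt hI.posSemidef)⁻¹)} := by
  set J := matIm δ with hJ
  set S := posSemidefSqrt hI.posSemidef with hSdef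
  have hSh : Sᴴ = S := psqrt_herm _
  have hSS : S * S = J := psqrt_mul_self _
  have hSdet : IsUnit S.det := by
    have h1 : IsUnit (S.det * S.det) := by
      rw [← det_mul, hSS]
      exact (Matrix.isUnit_iff_isUnit_det J).mp hI.isUnit
    exact isUnit_of_mul_isUnit_left h1
  have hSu : IsUnit S := (Matrix.isUnit_iff_isUnit_det S).mpr hSdet
  have hSiS : S⁻¹ * S = 1 := Matrix.nonsing_inv_mul S hSdet
  have hSSi : S * S⁻¹ = 1 := Matrix.mul_nonsing_inv S hSdet
  have hJinv : J⁻¹ = S⁻¹ * S⁻¹ := by rw [← hSS, Matrix.mul_inv_rev]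
  have h2Su : IsUnit ((2:ℂ) • S) := by
    rw [Matrix.isUnit_iff_isUnit_det, det_smul]
    exact (IsUnit.pow _ (by norm_num : IsUnit (2:ℂ))).mul hSdet
  have hconj : ∀ M : Matrix (Fin r) (Fin r) ℂ,
      S * ((4:ℂ) • M) * S = ((2:ℂ) • S)ᴴ * M * ((2:ℂ) • S) := by
    intro M
    rw [conjTranspose_smul, hSh]
    simp only [Matrix.smul_mul, Matrix.mul_smul, smul_smul]
    norm_num
  -- the forward formula identity
  have hfwd : ∀ X : Matrix (Fin r) (Fin r) ℂ,
      X = (Complex.I / 2) • J⁻¹ +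
        (1 / 2 : ℂ) • (S⁻¹ * ((2:ℂ)•(S*X*S) - Complex.I•1) * S⁻¹) := by
    intro X
    have hc1 : ∀ M : Matrix (Fin r) (Fin r) ℂ, S⁻¹ * (S * M) = M := fun M => by
      rw [← Matrix.mul_assoc, hSiS, Matrix.one_mul]
    simp only [Matrix.mul_sub, Matrix.sub_mul, Matrix.mul_smul, Matrix.smul_mul,
      Matrix.mul_one, Matrix.one_mul, Matrix.mul_assoc, hc1, hSSi, hJinv]
    module
  -- the backward formula identity
  have hbwd : ∀ R : Matrix (Fin r) (Fin r) ℂ,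
      (2:ℂ)•(S*((Complex.I / 2) • J⁻¹ + (1 / 2 : ℂ) • (S⁻¹ * R * S⁻¹))*S) - Complex.I•1
        = R := by
    intro R
    have hc2 : ∀ M : Matrix (Fin r) (Fin r) ℂ, S * (S⁻¹ * M) = M := fun M => by
      rw [← Matrix.mul_assoc, hSSi, Matrix.one_mul]
    simp only [Matrix.mul_add, Matrix.add_mul, Matrix.mul_smul, Matrix.smul_mul,
      Matrix.mul_one, Matrix.one_mul, Matrix.mul_assoc, hJinv, hc2, hSiS]
    module
  ext X
  simp only [Set.mem_setOf_eq]
  constructor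
  · rintro ⟨B, hB, rfl⟩
    have hdB : (matIm (δ - B)).PosDef := by
      rw [matIm_sub, sub_eq_add_neg]
      exact hI.add hB
    have hA : IsUnit (B - δ) := by
      have := (isUnit_of_matIm_posDef hdB).neg
      rwa [neg_sub] at this
    have hAdet : IsUnit (B - δ).det := (Matrix.isUnit_iff_isUnit_det _).mp hA
    set Y := (B - δ)⁻¹ with hY
    have hYA : Y * (B - δ) = 1 := Matrix.nonsing_inv_mul _ hAdet
    have hAY : (B - δ) * Y = 1 := Matrix.mul_nonsing_inv _ hAdet
    refine ⟨(2:ℂ)•(S*Y*S) - Complex.I•1, ?_, hfwd Y⟩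
    rw [idP J S Y hSh hSS, idQ δ (B - δ) Y hYA hAY,
      show B - δ + δ = B by abel, hconj]
    exact posDef_conj (posDef_conj hB (Matrix.isUnit_nonsing_inv_iff.mpr hA)) h2Su
  · rintro ⟨R, hR, rfl⟩
    set X := (Complex.I / 2) • J⁻¹ + (1 / 2 : ℂ) • (S⁻¹ * R * S⁻¹) with hXdef
    have hRX : (2:ℂ)•(S*X*S) - Complex.I•1 = R := hbwd R
    rw [← hRX] at hR
    rw [idP J S X hSh hSS, hconj] at hR
    have hNpos : (matIm X - Xᴴ * J * X).PosDef := (posDef_conj_iff h2Su).mp hR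
    have hImX : (matIm X).PosDef := by
      have := hNpos.add_posSemidef (hI.posSemidef.conjTranspose_mul_mul_same X)
      rwa [sub_add_cancel] at this
    have hXu : IsUnit X := isUnit_of_matIm_posDef hImX
    have hXdet : IsUnit X.det := (Matrix.isUnit_iff_isUnit_det X).mp hXu
    refine ⟨X⁻¹ + δ, ?_, ?_⟩
    · have hq := idQ δ X⁻¹ X (Matrix.mul_nonsing_inv X hXdet) (Matrix.nonsing_inv_mul X hXdet)
      rw [hq] at hNpos
      exact (posDef_conj_iff hXu).mp hNpos
    · rw [add_sub_cancel_right, Matrix.nonsing_inv_nonsing_inv X hXdet]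

end
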